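/- If a nontrivial 1-generated F-semilattice A is isomorphic to each of its nontrivial 1-generated subalgebras, then every nontrivial 1-generated algebra in the quasivariety Q(A) is isomorphic to A; in particular A is (up to isomorphism) the 1-generated free algebra of Q(A). -/
import Mathlib


inductive SLTerm (F : Type) : Type where
  | var : SLTerm F
  | meet : SLTerm F → SLTerm F → SLTerm F
  | act : F → SLTerm F → SLTerm F

/-- Evaluation of a unary term at an element of an `F`-semilattice. -/
def SLTerm.eval {F A : Type} [SemilatticeInf A] [SMul F A] : SLTerm F → A → A
  | .var, a => a
  | .meet s t, a => s.eval a ⊓ t.eval a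
  | .act g t, a => g • t.eval a

inductive SLTermN (F : Type) : Type where
  | var : ℕ → SLTermN F
  | meet : SLTermN F → SLTermN F → SLTermN F
  | act : F → SLTermN F → SLTermN F

def SLTermN.eval {F A : Type} [SemilatticeInf A] [SMul F A] : SLTermN F → (ℕ → A) → A
  | .var n, v => v n
  | .meet s t, v => s.eval v ⊓ t.eval v
  | .act g t, v => g • t.eval v

def SatQI (F : Type) (A : Type) [SemilatticeInf A] [SMul F A]
    (prem : List (SLTermN F × SLTermN F)) (c : SLTermN F × SLTermN F) : Prop :=
  ∀ v : ℕ → A, (∀ p ∈ prem, p.1.eval v = p.2.eval v) → c.1.eval v = c.2.eval v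

/-- `B` belongs to the quasivariety generated by `A`. -/
def InQ (F : Type) (A B : Type) [SemilatticeInf A] [SMul F A]
    [SemilatticeInf B] [SMul F B] : Prop :=
  ∀ prem c, SatQI F A prem c → SatQI F B prem c

/-- `B` belongs to the variety generated by `A`. -/
def InV (F : Type) (A B : Type) [SemilatticeInf A] [SMul F A]
    [SemilatticeInf B] [SMul F B] : Prop :=
  ∀ s t : SLTermN F, (∀ v : ℕ → A, s.eval v = t.eval v) → ∀ v : ℕ → B, s.eval v = t.eval v

def IsHom (F : Type) {A B : Type} [SemilatticeInf A] [SMul F A] [SemilatticeInf B] [SMul F B]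
    (φ : A → B) : Prop :=
  (∀ x y : A, φ (x ⊓ y) = φ x ⊓ φ y) ∧ ∀ (g : F) (x : A), φ (g • x) = g • φ x

/-- The subuniverse of `A` generated by `a`. -/
def genSet (F : Type) {A : Type} [SemilatticeInf A] [SMul F A] (a : A) : Set A :=
  Set.range fun t : SLTerm F => t.eval a

/-- The quasivariety generated by `A` is a minimal quasivariety of `F`-semilattices. -/
def MinGen (F : Type) [CommGroup F] (A : Type) [SemilatticeInf A] [MulAction F A] : Prop :=
  Nontrivial A ∧
    ∀ (B : Type) [SemilatticeInf B] [MulAction F B],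
      (∀ (g : F) (x y : B), g • (x ⊓ y) = g • x ⊓ g • y) →
      InQ F A B → Nontrivial B → InQ F B A

section Aux

variable {F : Type} [CommGroup F] {C : Type} [SemilatticeInf C] [MulAction F C]

lemma SLTerm.eval_inf (hd : ∀ (g : F) (x y : C), g • (x ⊓ y) = g • x ⊓ g • y)
    (t : SLTerm F) (x y : C) : t.eval (x ⊓ y) = t.eval x ⊓ t.eval y := by
  induction t with
  | var => rfl
  | meet s t hs ht =>
      simp only [SLTerm.eval, hs, ht]
      exact inf_inf_inf_comm _ _ _ _
  | act g t ht => simp only [SLTerm.eval, ht, hd]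

lemma SLTerm.eval_smul (hd : ∀ (g : F) (x y : C), g • (x ⊓ y) = g • x ⊓ g • y)
    (t : SLTerm F) (g : F) (x : C) : t.eval (g • x) = g • t.eval x := by
  induction t with
  | var => rfl
  | meet s t hs ht => simp only [SLTerm.eval, hs, ht, hd]
  | act h t ht =>
      simp only [SLTerm.eval, ht, smul_smul, mul_comm]

lemma SLTerm.eval_comm (hd : ∀ (g : F) (x y : C), g • (x ⊓ y) = g • x ⊓ g • y)
    (s t : SLTerm F) (x : C) : s.eval (t.eval x) = t.eval (s.eval x) := by
  induction t with
  | var => rfl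
  | meet t₁ t₂ h₁ h₂ =>
      simp only [SLTerm.eval]
      rw [SLTerm.eval_inf hd, h₁, h₂]
  | act g t ht =>
      simp only [SLTerm.eval]
      rw [SLTerm.eval_smul hd, ht]

lemma IsHom.eval {B : Type} [SemilatticeInf B] [MulAction F B] {φ : C → B}
    (hφ : IsHom F φ) (t : SLTerm F) (x : C) : φ (t.eval x) = t.eval (φ x) := by
  induction t with
  | var => rfl
  | meet s t hs ht => simp only [SLTerm.eval, hφ.1, hs, ht]
  | act g t ht => simp only [SLTerm.eval, hφ.2, ht]

/-- Convert a unary term to a term over countably many variables, using variable `0`. -/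
def SLTerm.toN : SLTerm F → SLTermN F
  | .var => .var 0
  | .meet s t => .meet s.toN t.toN
  | .act g t => .act g t.toN

lemma SLTerm.toN_eval (t : SLTerm F) (v : ℕ → C) :
    t.toN.eval v = t.eval (v 0) := by
  induction t with
  | var => rfl
  | meet s t hs ht => simp only [SLTerm.toN, SLTerm.eval, SLTermN.eval, hs, ht]
  | act g t ht => simp only [SLTerm.toN, SLTerm.eval, SLTermN.eval, ht]

end Aux

/-- If the nontrivial `1`-generated `A` is isomorphic to each of its nontrivial
`1`-generated subalgebras, then every nontrivial `1`-generated member of `Q(A)` is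
isomorphic to `A` (by an isomorphism matching the generators); in particular `A` is the
`1`-generated free algebra of `Q(A)`. -/
theorem stmt_11 (F : Type) [CommGroup F] (A : Type) [SemilatticeInf A] [MulAction F A]
    (hA : ∀ (g : F) (x y : A), g • (x ⊓ y) = g • x ⊓ g • y)
    (hnt : Nontrivial A)
    (a : A) (hgen : ∀ x : A, ∃ t : SLTerm F, t.eval a = x)
    (hiso : ∀ b : A, (∃ x y : A, x ∈ genSet F b ∧ y ∈ genSet F b ∧ x ≠ y) →
      ∃ φ : A → A, Function.Injective φ ∧ Set.range φ = genSet F b ∧ IsHom F φ) :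
    ∀ (B : Type) [SemilatticeInf B] [MulAction F B],
      (∀ (g : F) (x y : B), g • (x ⊓ y) = g • x ⊓ g • y) →
      InQ F A B → Nontrivial B →
      ∀ b : B, (∀ y : B, ∃ t : SLTerm F, t.eval b = y) →
        ∃ φ : A → B, Function.Bijective φ ∧ IsHom F φ ∧ φ a = b := by
  intro B _ _ hB hQ hBnt b hgenB
  -- Forward transfer: an equation at the generator of `A` holds at the generator of `B`.
  have forward : ∀ s t : SLTerm F, s.eval a = t.eval a → s.eval b = t.eval b := by
    intro s t h
    have hid : ∀ x : A, s.eval x = t.eval x := by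
      intro x
      obtain ⟨w, hw⟩ := hgen x
      rw [← hw, SLTerm.eval_comm hA, h, ← SLTerm.eval_comm hA]
    have hsat : SatQI F A [] (s.toN, t.toN) := by
      intro v _
      simpa only [SLTerm.toN_eval] using hid (v 0)
    have := hQ [] (s.toN, t.toN) hsat (fun _ => b) (by simp)
    simpa only [SLTerm.toN_eval] using this
  -- Backward transfer: an equation at the generator of `B` holds at the generator of `A`.
  have backward : ∀ s t : SLTerm F, s.eval b = t.eval b → s.eval a = t.eval a := by
    intro s t h
    obtain ⟨y, z, hyz⟩ := hBnt
    obtain ⟨P, hP⟩ := hgenB y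
    obtain ⟨Q, hQ'⟩ := hgenB z
    have hfailB : ¬ SatQI F B [(s.toN, t.toN)] (P.toN, Q.toN) := by
      intro H
      have := H (fun _ => b) (by
        intro p hp
        simp only [List.mem_singleton] at hp
        subst hp
        simpa only [SLTerm.toN_eval] using h)
      simp only [SLTerm.toN_eval] at this
      exact hyz (by rw [← hP, ← hQ', this])
    have hfailA : ¬ SatQI F A [(s.toN, t.toN)] (P.toN, Q.toN) := fun H => hfailB (hQ _ _ H)
    simp only [SatQI, not_forall] at hfailA
    obtain ⟨v, hv, hne⟩ := hfailA
    set x : A := v 0 with hx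
    have hst : s.eval x = t.eval x := by
      have := hv (s.toN, t.toN) (List.mem_singleton_self _)
      simpa only [SLTerm.toN_eval] using this
    have hPQ : P.eval x ≠ Q.eval x := by
      simpa only [SLTerm.toN_eval] using hne
    obtain ⟨φ, hinj, hrange, hhom⟩ :=
      hiso x ⟨P.eval x, Q.eval x, ⟨P, rfl⟩, ⟨Q, rfl⟩, hPQ⟩
    have hmem : φ a ∈ genSet F x := hrange ▸ Set.mem_range_self a
    obtain ⟨u, hu⟩ := hmem
    have key : φ (s.eval a) = φ (t.eval a) := by
      rw [hhom.eval s a, hhom.eval t a, ← hu]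
      rw [SLTerm.eval_comm hA s u, hst, ← SLTerm.eval_comm hA t u]
    exact hinj key
  -- Define the isomorphism via chosen terms.
  choose T hT using hgen
  refine ⟨fun x => (T x).eval b, ⟨?_, ?_⟩, ⟨?_, ?_⟩, ?_⟩
  · -- injective
    intro x y hxy
    have := backward (T x) (T y) hxy
    rw [hT x, hT y] at this
    exact this
  · -- surjective
    intro y
    obtain ⟨t, ht⟩ := hgenB y
    refine ⟨t.eval a, ?_⟩
    have : (T (t.eval a)).eval a = t.eval a := hT _
    show (T (t.eval a)).eval b = y
    rw [forward _ _ this, ht]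
  · -- meets
    intro x y
    have : (T (x ⊓ y)).eval a = (SLTerm.meet (T x) (T y)).eval a := by
      simp only [SLTerm.eval, hT]
    have := forward _ _ this
    simpa only [SLTerm.eval] using this
  · -- action
    intro g x
    have : (T (g • x)).eval a = (SLTerm.act g (T x)).eval a := by
      simp only [SLTerm.eval, hT]
    have := forward _ _ this
    simpa only [SLTerm.eval] using this
  · -- generator
    have : (T a).eval a = (SLTerm.var : SLTerm F).eval a := by
      simp only [SLTerm.eval, hT]
    have := forward _ _ this
    simpa only [SLTerm.eval] using this
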